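/- Fix k ≥ 1, integers k_0, k_1, k_2 ≥ 1 with k_0 + k_1 + k_2 = k, nonincreasing integers N_{1,1} ≥ ... ≥ N_{1,k} ≥ 0 (N_{1,k+1} := 0) and nondecreasing 0 ≤ N_{2,1} ≤ ... ≤ N_{2,k} (N_{2,0} := 0). For a binary k-tuple p define l^1_p(q) = q^{∑ p_i N_{1,i}}, δ^1_p(q) = ∏_{i=1}^k (1-[p_i=0,p_{i+1}=1]q^{N_{1,i}-N_{1,i+1}}) with p_{k+1}=0, l^2_p(q) = q^{∑ p_i N_{2,i}}, and let g_j^1(p) change the last j ones of p to zeros. Define L_{a,b,c}(q) = ∑_{p with b+c ones} l^1_p(q) δ^1_p(q) l^2_{g_b^1(p)}(q) for a+b+c = k. Then L_{k_0,k_1,k_2}(q) - L_{k_0-1,k_1+1,k_2}(q) - L_{k_0,k_1-1,k_2+1}(q) + L_{k_0-1,k_1,k_2+1}(q) = ∑_{p with k_1+k_2 ones, p_k = 1} l^1_p δ^1_p l^2_{g_{k_1}^1(p)} (1-q^{N_{2,r(p)}}) + ∑_{p with k_1+k_2 ones, p_k = 0} l^1_p δ^1_p (1-q^{N_{1,k}})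 l^2_{g_{k_1}^1(p)} (1-q^{N_{2,r(p)}}), where r(p) = pos_{1,k_2+1}(p) is the position of the (k_2+1)-th one of p. -/
import Mathlib


open Finset Polynomial

/-- Value of a binary `k`-tuple at 1-based position `i`, with value `0` outside `1..k`
(encoding the conventions `p₀ = 0` and `p_{k+1} = 0`). -/
def ext' (k : ℕ) (p : Fin k → Fin 2) (i : ℕ) : ℕ :=
  if h : 1 ≤ i ∧ i ≤ k then (p ⟨i - 1, by omega⟩ : ℕ) else 0

/-- Number of ones of a binary tuple. -/
def onesCount (k : ℕ) (p : Fin k → Fin 2) : ℕ := ∑ i : Fin k, (p i : ℕ)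

/-- The partial order: `p1 ≤ p2` iff every initial partial sum of `p1` is ≥ that of `p2`. -/
def tle (k : ℕ) (p1 p2 : Fin k → Fin 2) : Prop :=
  ∀ j ∈ Finset.Icc 1 k,
    ∑ i ∈ Finset.Icc 1 j, ext' k p2 i ≤ ∑ i ∈ Finset.Icc 1 j, ext' k p1 i

instance (k : ℕ) (p1 p2 : Fin k → Fin 2) : Decidable (tle k p1 p2) := by
  unfold tle; infer_instance

/-- `l_p(q) = q^{∑ p_i N_i}` as a polynomial in `q = X` over `ℤ`. -/
noncomputable def lTerm (k : ℕ) (N : ℕ → ℕ) (p : Fin k → Fin 2) : Polynomial ℤ :=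
  Polynomial.X ^ (∑ i ∈ Finset.Icc 1 k, ext' k p i * N i)

/-- `δ¹_p(q)`: factors read from the right neighbour, convention `p_{k+1} = 0`. -/
noncomputable def deltaR (k : ℕ) (N : ℕ → ℕ) (p : Fin k → Fin 2) : Polynomial ℤ :=
  ∏ i ∈ Finset.Icc 1 k,
    (1 - if ext' k p i = 0 ∧ ext' k p (i + 1) = 1
         then Polynomial.X ^ (N i - N (i + 1)) else 0)

/-- `δ²_p(q)`: factors read from the left neighbour, conventions `p₀ = 0`, `N₀ = 0`. -/
noncomputable def deltaL (k : ℕ) (N : ℕ → ℕ) (p : Fin k → Fin 2) : Polynomial ℤ :=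
  ∏ i ∈ Finset.Icc 1 k,
    (1 - if ext' k p i = 0 ∧ ext' k p (i - 1) = 1
         then Polynomial.X ^ (N i - N (i - 1)) else 0)

/-- `g_i^1(p)`: change the last `i` ones of `p` (largest positions) into zeros. -/
def g1 (k i : ℕ) (p : Fin k → Fin 2) : Fin k → Fin 2 := fun m =>
  if p m = 1 ∧ (Finset.univ.filter (fun n => m ≤ n ∧ p n = 1)).card ≤ i then 0 else p m

/-- `g_i^0(p)`: change the last `i` zeros of `p` (largest positions) into ones. -/
def g0 (k i : ℕ) (p : Fin k → Fin 2) : Fin k → Fin 2 := fun m =>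
  if p m = 0 ∧ (Finset.univ.filter (fun n => m ≤ n ∧ p n = 0)).card ≤ i then 1 else p m

/-- `f_i^1(p)`: change the first `i` ones of `p` (smallest positions) into zeros. -/
def f1 (k i : ℕ) (p : Fin k → Fin 2) : Fin k → Fin 2 := fun m =>
  if p m = 1 ∧ (Finset.univ.filter (fun n => n ≤ m ∧ p n = 1)).card ≤ i then 0 else p m

/-- `f_i^0(p)`: change the first `i` zeros of `p` (smallest positions) into ones. -/
def f0 (k i : ℕ) (p : Fin k → Fin 2) : Fin k → Fin 2 := fun m =>
  if p m = 0 ∧ (Finset.univ.filter (fun n => n ≤ m ∧ p n = 0)).card ≤ i then 1 else p m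

/-- Coordinatewise complement of a binary tuple. -/
def compl' (k : ℕ) (p : Fin k → Fin 2) : Fin k → Fin 2 := fun m => 1 - p m

/-- 1-based position of the `j`-th one of `p`. -/
noncomputable def pos1 (k j : ℕ) (p : Fin k → Fin 2) : ℕ :=
  sInf {m | ext' k p m = 1 ∧ ∑ i ∈ Finset.Icc 1 m, ext' k p i = j}

/-- 1-based position of the `j`-th zero of `p`. -/
noncomputable def pos0 (k j : ℕ) (p : Fin k → Fin 2) : ℕ :=
  sInf {m | 1 ≤ m ∧ m ≤ k ∧ ext' k p m = 0 ∧
    ∑ i ∈ Finset.Icc 1 m, (1 - ext' k p i) = j}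

open Matrix

/-- The linear term `L_{a,b,c}(q) = ∑_{p : b+c ones} l¹_p δ¹_p l²_{g_b^1(p)}`
(it depends only on `b`, `c`). -/
noncomputable def Lfun (k : ℕ) (N1 N2 : ℕ → ℕ) (b c : ℕ) : Polynomial ℤ :=
  ∑ p ∈ Finset.univ.filter (fun p : Fin k → Fin 2 => onesCount k p = b + c),
    lTerm k N1 p * deltaR k N1 p * lTerm k N2 (g1 k b p)

-- prefix count
def cnt (k : ℕ) (p : Fin k → Fin 2) (j : ℕ) : ℕ := ∑ i ∈ Finset.Icc 1 j, ext' k p i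

lemma fin2cases (x : Fin 2) : x = 0 ∨ x = 1 := by fin_cases x <;> simp

lemma ext'_le_one (k : ℕ) (p : Fin k → Fin 2) (i : ℕ) : ext' k p i ≤ 1 := by
  unfold ext'; split
  · have := (p ⟨i - 1, by omega⟩).isLt; omega
  · omega

lemma ext'_zero_of_not (k : ℕ) (p : Fin k → Fin 2) (i : ℕ) (h : ¬(1 ≤ i ∧ i ≤ k)) :
    ext' k p i = 0 := by unfold ext'; rw [dif_neg h]

lemma ext'_one_range {k : ℕ} {p : Fin k → Fin 2} {i : ℕ} (h : ext' k p i = 1) :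
    1 ≤ i ∧ i ≤ k := by
  by_contra hc; rw [ext'_zero_of_not k p i hc] at h; omega

lemma sum_Icc_fin {M : Type*} [AddCommMonoid M] (k : ℕ) (g : ℕ → M) :
    ∑ i ∈ Finset.Icc 1 k, g i = ∑ n : Fin k, g (↑n + 1) := by
  rw [show Finset.Icc 1 k = Finset.Ico 1 (k+1) by rw [Finset.Ico_add_one_right_eq_Icc],
    Finset.sum_Ico_eq_sum_range, Fin.sum_univ_eq_sum_range (fun n => g (n + 1)) k]
  simp [Nat.add_comm]

lemma ext'_fin (k : ℕ) (p : Fin k → Fin 2) (n : Fin k) : ext' k p (↑n + 1) = (p n : ℕ) := by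
  unfold ext'
  rw [dif_pos ⟨by omega, by omega⟩]
  congr 1

lemma onesCount_eq_cnt (k : ℕ) (p : Fin k → Fin 2) : onesCount k p = cnt k p k := by
  unfold onesCount cnt
  rw [sum_Icc_fin]
  exact Finset.sum_congr rfl (fun n _ => (ext'_fin k p n).symm)

lemma cnt_mono (k : ℕ) (p : Fin k → Fin 2) {j j' : ℕ} (h : j ≤ j') :
    cnt k p j ≤ cnt k p j' := by
  unfold cnt
  exact Finset.sum_le_sum_of_subset (Finset.Icc_subset_Icc le_rfl h)

lemma cnt_split (k : ℕ) (p : Fin k → Fin 2) {j j' : ℕ} (h : j ≤ j') :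
    cnt k p j' = cnt k p j + ∑ i ∈ Finset.Ioc j j', ext' k p i := by
  unfold cnt
  have e : ∀ m : ℕ, Finset.Icc 1 m = Finset.Ioc 0 m := by
    intro m; ext i; simp [Finset.mem_Icc, Finset.mem_Ioc]; omega
  rw [e, e, ← Finset.sum_Ioc_consecutive _ (Nat.zero_le j) h]

lemma cnt_succ (k : ℕ) (p : Fin k → Fin 2) (j : ℕ) :
    cnt k p (j + 1) = cnt k p j + ext' k p (j + 1) := by
  rw [cnt_split k p (Nat.le_succ j)]
  congr 1
  rw [show Finset.Ioc j (j+1) = {j+1} by ext i; simp [Finset.mem_Ioc, Nat.lt_succ_iff],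
    Finset.sum_singleton]

lemma cnt_eq_of_ge (k : ℕ) (p : Fin k → Fin 2) {j : ℕ} (h : k ≤ j) :
    cnt k p j = onesCount k p := by
  rw [onesCount_eq_cnt, cnt_split k p h]
  have : ∑ i ∈ Finset.Ioc k j, ext' k p i = 0 := by
    apply Finset.sum_eq_zero; intro i hi
    simp only [Finset.mem_Ioc] at hi
    exact ext'_zero_of_not k p i (by omega)
  omega

lemma cnt_le_total (k : ℕ) (p : Fin k → Fin 2) (j : ℕ) : cnt k p j ≤ onesCount k p := by
  rcases le_or_gt j k with h | h
  · rw [onesCount_eq_cnt]; exact cnt_mono k p h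
  · rw [cnt_eq_of_ge k p h.le]

-- pos1 lemmas
lemma pos1_eq {k j : ℕ} {p : Fin k → Fin 2} {r : ℕ} (h1 : ext' k p r = 1)
    (h2 : cnt k p r = j) : pos1 k j p = r := by
  have key : ∀ m, ext' k p m = 1 → cnt k p m = j → m = r := by
    intro m hm1 hm2
    by_contra hne
    rcases lt_or_gt_of_ne hne with h | h
    · -- m < r : cnt r ≥ cnt m + 1
      have := cnt_split k p h.le
      have hr : ∑ i ∈ Finset.Ioc m r, ext' k p i ≥ 1 := by
        calc 1 = ext' k p r := h1.symm
        _ ≤ ∑ i ∈ Finset.Ioc m r, ext' k p i :=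
          Finset.single_le_sum (f := fun i => ext' k p i) (fun i _ => Nat.zero_le _)
            (Finset.mem_Ioc.mpr ⟨h, le_rfl⟩)
      omega
    · have := cnt_split k p h.le
      have hr : ∑ i ∈ Finset.Ioc r m, ext' k p i ≥ 1 := by
        calc 1 = ext' k p m := hm1.symm
        _ ≤ ∑ i ∈ Finset.Ioc r m, ext' k p i :=
          Finset.single_le_sum (f := fun i => ext' k p i) (fun i _ => Nat.zero_le _)
            (Finset.mem_Ioc.mpr ⟨h, le_rfl⟩)
      omega
  have hset : {m | ext' k p m = 1 ∧ ∑ i ∈ Finset.Icc 1 m, ext' k p i = j} = {r} := by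
    ext m
    simp only [Set.mem_setOf_eq, Set.mem_singleton_iff]
    constructor
    · rintro ⟨a, b⟩; exact key m a b
    · rintro rfl; exact ⟨h1, h2⟩
  rw [pos1, hset, csInf_singleton]

lemma pos1_exists {k j : ℕ} {p : Fin k → Fin 2} (hj : 1 ≤ j) (hjt : j ≤ onesCount k p) :
    ∃ r, ext' k p r = 1 ∧ cnt k p r = j := by
  classical
  have hne : (Set.Nonempty {m | j ≤ cnt k p m}) := ⟨k, by
    simp only [Set.mem_setOf_eq]; rw [← onesCount_eq_cnt]; exact hjt⟩
  set r := sInf {m | j ≤ cnt k p m} with hr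
  have hmem : j ≤ cnt k p r := Nat.sInf_mem hne
  have hrpos : 1 ≤ r := by
    rcases Nat.eq_zero_or_pos r with h0 | h; swap; · exact h
    exfalso
    have : cnt k p 0 = 0 := by simp [cnt]
    rw [h0, this] at hmem; omega
  have hlt : ¬ j ≤ cnt k p (r - 1) := fun hc =>
    Nat.notMem_of_lt_sInf (show r - 1 < r by omega) hc
  have hsucc : cnt k p r = cnt k p (r-1) + ext' k p r := by
    have := cnt_succ k p (r-1)
    rwa [show r - 1 + 1 = r by omega] at this
  have hle := ext'_le_one k p r
  exact ⟨r, by omega, by omega⟩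

lemma pos1_spec {k j : ℕ} {p : Fin k → Fin 2} (hj : 1 ≤ j) (hjt : j ≤ onesCount k p) :
    ext' k p (pos1 k j p) = 1 ∧ cnt k p (pos1 k j p) = j := by
  obtain ⟨r, h1, h2⟩ := pos1_exists hj hjt
  rw [pos1_eq h1 h2]; exact ⟨h1, h2⟩

-- all positions after the last one carry 0
lemma ext'_zero_of_gt_last {k : ℕ} {p : Fin k → Fin 2} (hm : 1 ≤ onesCount k p)
    {i : ℕ} (hi : pos1 k (onesCount k p) p < i) : ext' k p i = 0 := by
  obtain ⟨h1, h2⟩ := pos1_spec hm le_rfl (p := p) (j := onesCount k p)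
  by_contra hc
  have hone : ext' k p i = 1 := by have := ext'_le_one k p i; omega
  have := cnt_split k p hi.le
  have hr : ∑ x ∈ Finset.Ioc (pos1 k (onesCount k p) p) i, ext' k p x ≥ 1 := by
    calc 1 = ext' k p i := hone.symm
    _ ≤ _ := Finset.single_le_sum (f := fun x => ext' k p x) (fun x _ => Nat.zero_le _)
        (Finset.mem_Ioc.mpr ⟨hi, le_rfl⟩)
  have := cnt_le_total k p i
  omega

lemma cnt_eq_total_of_ge_last {k : ℕ} {p : Fin k → Fin 2} (hm : 1 ≤ onesCount k p)
    {j : ℕ} (hj : pos1 k (onesCount k p) p ≤ j) : cnt k p j = onesCount k p := by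
  obtain ⟨h1, h2⟩ := pos1_spec hm le_rfl (p := p) (j := onesCount k p)
  have := cnt_mono k p hj
  have := cnt_le_total k p j
  omega

lemma card_suffix (k : ℕ) (p : Fin k → Fin 2) (m : Fin k) :
    (Finset.univ.filter (fun n => m ≤ n ∧ p n = 1)).card
      = onesCount k p - cnt k p ↑m := by
  classical
  have h1 : (Finset.univ.filter (fun n => m ≤ n ∧ p n = 1)).card
      = ∑ n : Fin k, (if m ≤ n then (p n : ℕ) else 0) := by
    rw [Finset.card_filter]
    apply Finset.sum_congr rfl
    intro n _
    rcases fin2cases (p n) with h | h <;> rw [h] <;> by_cases hm : m ≤ n <;>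
      simp [hm]
  have h2 : cnt k p ↑m + ∑ n : Fin k, (if m ≤ n then (p n : ℕ) else 0)
      = onesCount k p := by
    rw [onesCount_eq_cnt, cnt_split k p (show (↑m : ℕ) ≤ k from m.isLt.le)]
    congr 1
    have e1 : ∑ i ∈ Finset.Ioc (↑m : ℕ) k, ext' k p i
        = ∑ i ∈ Finset.Icc 1 k, (if (↑m : ℕ) + 1 ≤ i then ext' k p i else 0) := by
      rw [← Finset.sum_filter]
      congr 1
      ext i
      simp only [Finset.mem_Ioc, Finset.mem_filter, Finset.mem_Icc]
      omega
    rw [e1, sum_Icc_fin]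
    apply Finset.sum_congr rfl
    intro n _
    rw [ext'_fin]
    exact if_congr (by rw [Fin.le_def]; omega) rfl rfl |>.symm
  omega

lemma ext'_g1 (k b : ℕ) (p : Fin k → Fin 2) (i : ℕ) :
    ext' k (g1 k b p) i
      = if onesCount k p - b ≤ cnt k p (i - 1) then 0 else ext' k p i := by
  by_cases hr : 1 ≤ i ∧ i ≤ k
  · have hifin : i - 1 < k := by omega
    set n : Fin k := ⟨i - 1, hifin⟩ with hn
    have he : ∀ q : Fin k → Fin 2, ext' k q i = (q n : ℕ) := by
      intro q; unfold ext'; rw [dif_pos hr]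
    rw [he, he]
    simp only [g1]
    rw [card_suffix]
    have hcnt : (↑n : ℕ) = i - 1 := rfl
    rcases fin2cases (p n) with h | h
    · rw [h]; simp
    · rw [h]
      by_cases hc : onesCount k p - b ≤ cnt k p (i - 1)
      · rw [if_pos ⟨rfl, by rw [hcnt]; omega⟩, if_pos hc]; simp
      · rw [if_neg (by rw [hcnt]; push_neg; intro _; omega), if_neg hc]
  · rw [ext'_zero_of_not k _ i hr, ext'_zero_of_not k p i hr]; simp

lemma lTerm_congr {k : ℕ} {N : ℕ → ℕ} {p p' : Fin k → Fin 2}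
    (h : ∀ i ∈ Finset.Icc 1 k, ext' k p i = ext' k p' i) :
    lTerm k N p = lTerm k N p' := by
  unfold lTerm
  congr 1
  exact Finset.sum_congr rfl (fun i hi => by rw [h i hi])

lemma ext'_g1_succ {k b : ℕ} {p : Fin k → Fin 2} (hb : b + 1 ≤ onesCount k p) (i : ℕ) :
    ext' k (g1 k b p) i
      = ext' k (g1 k (b+1) p) i
        + (if i = pos1 k (onesCount k p - b) p then 1 else 0) := by
  set c := onesCount k p - b with hc
  have hc1 : 1 ≤ c := by omega
  obtain ⟨hr1, hr2⟩ := pos1_spec hc1 (by omega) (p := p)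
  set r := pos1 k c p with hrdef
  have hcnt_r : cnt k p (r - 1) + ext' k p r = c := by
    have := cnt_succ k p (r - 1)
    rw [show r - 1 + 1 = r by have := (ext'_one_range hr1).1; omega] at this
    omega
  rw [ext'_g1, ext'_g1]
  have hb1 : onesCount k p - (b+1) = c - 1 := by omega
  rw [hb1]
  by_cases hir : i = r
  · subst hir
    rw [if_pos rfl, if_neg (by omega), if_pos (by omega), hr1]
  · rw [if_neg hir]
    rcases Nat.eq_zero_or_pos (ext' k p i) with h0 | h1
    · rw [h0]; split <;> split <;> omega
    · have hone : ext' k p i = 1 := by have := ext'_le_one k p i; omega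
      have hne : cnt k p (i - 1) ≠ c - 1 := by
        intro hcc
        apply hir
        refine (pos1_eq hone ?_).symm
        have := cnt_succ k p (i - 1)
        rw [show i - 1 + 1 = i by have := (ext'_one_range hone).1; omega] at this
        omega
      have : (c ≤ cnt k p (i-1)) ↔ (c - 1 ≤ cnt k p (i-1)) := by omega
      rw [if_congr this rfl rfl]
      omega

lemma lTerm_g1_succ {k b : ℕ} {N : ℕ → ℕ} {p : Fin k → Fin 2}
    (hb : b + 1 ≤ onesCount k p) :
    lTerm k N (g1 k b p)
      = Polynomial.X ^ (N (pos1 k (onesCount k p - b) p)) * lTerm k N (g1 k (b+1) p) := by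
  set r := pos1 k (onesCount k p - b) p with hrdef
  have hc1 : 1 ≤ onesCount k p - b := by omega
  obtain ⟨hr1, hr2⟩ := pos1_spec hc1 (by omega) (p := p)
  have hrmem : r ∈ Finset.Icc 1 k := by
    have := ext'_one_range hr1; simp [Finset.mem_Icc]; omega
  unfold lTerm
  rw [← pow_add]
  congr 1
  have e1 : ∀ i ∈ Finset.Icc 1 k, ext' k (g1 k b p) i * N i
      = ext' k (g1 k (b+1) p) i * N i + (if i = r then N r else 0) := by
    intro i _
    rw [ext'_g1_succ hb i, ← hrdef]
    by_cases h : i = r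
    · subst h; simp [Nat.add_mul]
    · simp [h]
  rw [Finset.sum_congr rfl e1, Finset.sum_add_distrib, Finset.sum_ite_eq' _ r, if_pos hrmem]
  omega

def ins (k j : ℕ) (p : Fin k → Fin 2) : Fin k → Fin 2 := fun n =>
  if (↑n + 1 = j) then 1 else p n

lemma ext'_ins {k j : ℕ} (hj1 : 1 ≤ j) (hjk : j ≤ k) (p : Fin k → Fin 2) (i : ℕ) :
    ext' k (ins k j p) i = if i = j then 1 else ext' k p i := by
  by_cases hr : 1 ≤ i ∧ i ≤ k
  · have hifin : i - 1 < k := by omega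
    have he : ∀ q : Fin k → Fin 2, ext' k q i = (q ⟨i - 1, hifin⟩ : ℕ) := by
      intro q; unfold ext'; rw [dif_pos hr]
    rw [he, he]
    simp only [ins]
    by_cases h : i = j
    · rw [if_pos (by omega), if_pos h]; simp
    · rw [if_neg (by omega), if_neg h]
  · rw [ext'_zero_of_not k _ i hr, ext'_zero_of_not k p i hr, if_neg (by omega)]

lemma cnt_ins {k j : ℕ} (hj1 : 1 ≤ j) (hjk : j ≤ k) {p : Fin k → Fin 2}
    (hpj : ext' k p j = 0) (m : ℕ) :
    cnt k (ins k j p) m = cnt k p m + (if j ≤ m then 1 else 0) := by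
  unfold cnt
  have e : ∀ i ∈ Finset.Icc 1 m, ext' k (ins k j p) i
      = ext' k p i + (if i = j then 1 else 0) := by
    intro i _
    rw [ext'_ins hj1 hjk]
    by_cases h : i = j
    · subst h; rw [hpj]; simp
    · simp [h]
  rw [Finset.sum_congr rfl e, Finset.sum_add_distrib, Finset.sum_ite_eq' _ j]
  by_cases h : j ≤ m
  · rw [if_pos (by simp [Finset.mem_Icc]; omega), if_pos h]
  · rw [if_neg (by simp [Finset.mem_Icc]; omega), if_neg h]

lemma onesCount_ins {k j : ℕ} (hj1 : 1 ≤ j) (hjk : j ≤ k) {p : Fin k → Fin 2}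
    (hpj : ext' k p j = 0) :
    onesCount k (ins k j p) = onesCount k p + 1 := by
  rw [onesCount_eq_cnt, onesCount_eq_cnt, cnt_ins hj1 hjk hpj, if_pos hjk]

lemma lTerm_ins {k j : ℕ} (N : ℕ → ℕ) (hj1 : 1 ≤ j) (hjk : j ≤ k) {p : Fin k → Fin 2}
    (hpj : ext' k p j = 0) :
    lTerm k N (ins k j p) = Polynomial.X ^ (N j) * lTerm k N p := by
  unfold lTerm
  rw [← pow_add]
  congr 1
  have e : ∀ i ∈ Finset.Icc 1 k, ext' k (ins k j p) i * N i
      = ext' k p i * N i + (if i = j then N j else 0) := by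
    intro i _
    rw [ext'_ins hj1 hjk]
    by_cases h : i = j
    · subst h; rw [hpj]; simp
    · simp [h]
  rw [Finset.sum_congr rfl e, Finset.sum_add_distrib, Finset.sum_ite_eq' _ j,
    if_pos (by simp [Finset.mem_Icc]; omega)]
  omega

lemma deltaR_ins (N : ℕ → ℕ) {k : ℕ} {p : Fin k → Fin 2} (hm : 1 ≤ onesCount k p)
    {j : ℕ} (hjt : pos1 k (onesCount k p) p < j) (hjk : j ≤ k) :
    deltaR k N (ins k j p)
      = (if j = pos1 k (onesCount k p) p + 1 then 1
          else (1 - Polynomial.X ^ (N (j-1) - N j))) * deltaR k N p := by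
  set t := pos1 k (onesCount k p) p with htdef
  obtain ⟨ht1, ht2⟩ := pos1_spec hm le_rfl (p := p)
  have htr := ext'_one_range ht1
  have hj2 : 2 ≤ j := by omega
  have hj1 : 1 ≤ j := by omega
  have hjm : j - 1 ∈ Finset.Icc 1 k := by simp [Finset.mem_Icc]; omega
  have hzero : ∀ i, t < i → ext' k p i = 0 := fun i hi => ext'_zero_of_gt_last hm hi
  have hpj : ext' k p j = 0 := hzero j hjt
  have hpj1 : ext' k p (j+1) = 0 := hzero (j+1) (by omega)
  unfold deltaR
  rw [← Finset.mul_prod_erase _ _ hjm, ← Finset.mul_prod_erase _ _ hjm]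
  have hP : ∏ i ∈ (Finset.Icc 1 k).erase (j-1),
      ((1 : Polynomial ℤ) - if ext' k (ins k j p) i = 0 ∧ ext' k (ins k j p) (i + 1) = 1
           then Polynomial.X ^ (N i - N (i + 1)) else 0)
      = ∏ i ∈ (Finset.Icc 1 k).erase (j-1),
      ((1 : Polynomial ℤ) - if ext' k p i = 0 ∧ ext' k p (i + 1) = 1
           then Polynomial.X ^ (N i - N (i + 1)) else 0) := by
    apply Finset.prod_congr rfl
    intro i hi
    obtain ⟨hine, hiIcc⟩ := Finset.mem_erase.mp hi
    by_cases hij : i = j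
    · have e1 : ext' k (ins k j p) i = 1 := by
        rw [ext'_ins hj1 hjk, if_pos hij]
      have e2 : ext' k (ins k j p) (i+1) = ext' k p (i+1) := by
        rw [ext'_ins hj1 hjk, if_neg (by omega)]
      rw [e1, e2, hij, hpj, hpj1]
      simp
    · have e1 : ext' k (ins k j p) i = ext' k p i := by
        rw [ext'_ins hj1 hjk, if_neg hij]
      have e2 : ext' k (ins k j p) (i+1) = ext' k p (i+1) := by
        rw [ext'_ins hj1 hjk, if_neg (by omega)]
      rw [e1, e2]
  rw [hP]
  have hfp : ((1 : Polynomial ℤ) - if ext' k p (j-1) = 0 ∧ ext' k p (j-1+1) = 1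
      then Polynomial.X ^ (N (j-1) - N (j-1+1)) else 0) = 1 := by
    rw [show j - 1 + 1 = j by omega, hpj]
    simp
  have hfins : ((1 : Polynomial ℤ) - if ext' k (ins k j p) (j-1) = 0 ∧ ext' k (ins k j p) (j-1+1) = 1
      then Polynomial.X ^ (N (j-1) - N (j-1+1)) else 0)
      = (if j = t + 1 then 1 else (1 - Polynomial.X ^ (N (j-1) - N j))) := by
    have e1 : ext' k (ins k j p) (j-1) = ext' k p (j-1) := by
      rw [ext'_ins hj1 hjk, if_neg (by omega)]
    have e2 : ext' k (ins k j p) (j-1+1) = 1 := by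
      rw [ext'_ins hj1 hjk, if_pos (by omega)]
    rw [show j - 1 + 1 = j by omega] at e2 ⊢
    rw [e1, e2]
    by_cases hcase : j = t + 1
    · rw [if_pos hcase, if_neg (by rw [show j - 1 = t by omega, ht1]; simp)]
      simp
    · rw [if_neg hcase, if_pos ⟨hzero (j-1) (by omega), rfl⟩]
  rw [hfp, hfins]
  ring

def del (k j : ℕ) (p : Fin k → Fin 2) : Fin k → Fin 2 := fun n =>
  if (↑n + 1 = j) then 0 else p n

lemma ext'_del {k j : ℕ} (hj1 : 1 ≤ j) (hjk : j ≤ k) (p : Fin k → Fin 2) (i : ℕ) :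
    ext' k (del k j p) i = if i = j then 0 else ext' k p i := by
  by_cases hr : 1 ≤ i ∧ i ≤ k
  · have hifin : i - 1 < k := by omega
    have he : ∀ q : Fin k → Fin 2, ext' k q i = (q ⟨i - 1, hifin⟩ : ℕ) := by
      intro q; unfold ext'; rw [dif_pos hr]
    rw [he, he]
    simp only [del]
    by_cases h : i = j
    · rw [if_pos (by omega), if_pos h]; simp
    · rw [if_neg (by omega), if_neg h]
  · rw [ext'_zero_of_not k _ i hr, ext'_zero_of_not k p i hr]
    split <;> rfl

lemma cnt_del {k j : ℕ} (hj1 : 1 ≤ j) (hjk : j ≤ k) {p : Fin k → Fin 2}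
    (hpj : ext' k p j = 1) (m : ℕ) :
    cnt k p m = cnt k (del k j p) m + (if j ≤ m then 1 else 0) := by
  unfold cnt
  have e : ∀ i ∈ Finset.Icc 1 m, ext' k p i
      = ext' k (del k j p) i + (if i = j then 1 else 0) := by
    intro i _
    rw [ext'_del hj1 hjk]
    by_cases h : i = j
    · subst h; rw [hpj]; simp
    · simp [h]
  rw [Finset.sum_congr rfl e, Finset.sum_add_distrib, Finset.sum_ite_eq' _ j]
  by_cases h : j ≤ m
  · rw [if_pos (by simp [Finset.mem_Icc]; omega), if_pos h]
  · rw [if_neg (by simp [Finset.mem_Icc]; omega), if_neg h]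

lemma onesCount_del {k j : ℕ} (hj1 : 1 ≤ j) (hjk : j ≤ k) {p : Fin k → Fin 2}
    (hpj : ext' k p j = 1) :
    onesCount k p = onesCount k (del k j p) + 1 := by
  rw [onesCount_eq_cnt, onesCount_eq_cnt, cnt_del hj1 hjk hpj k, if_pos hjk]

lemma teleX (N1 : ℕ → ℕ) (k : ℕ) (hN1 : ∀ i, 1 ≤ i → i ≤ k → N1 (i+1) ≤ N1 i)
    (t : ℕ) (ht1 : 1 ≤ t) :
    ∀ u, t + 1 ≤ u → u ≤ k →
      ∑ j ∈ Finset.Ioc t u, (Polynomial.X ^ (N1 j) *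
        (if j = t + 1 then 1 else (1 - Polynomial.X ^ (N1 (j-1) - N1 j))) : Polynomial ℤ)
        = Polynomial.X ^ (N1 u) := by
  intro u hu
  induction u, hu using Nat.le_induction with
  | base =>
    intro _
    rw [show Finset.Ioc t (t+1) = {t+1} by
        ext i; simp [Finset.mem_Ioc, Nat.lt_succ_iff],
      Finset.sum_singleton, if_pos rfl, mul_one]
  | succ u hu ih =>
    intro huk
    rw [show Finset.Ioc t (u+1) = insert (u+1) (Finset.Ioc t u) by
        ext i; simp [Finset.mem_Ioc, Nat.lt_succ_iff]; omega,
      Finset.sum_insert (by simp [Finset.mem_Ioc]), ih (by omega),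
      if_neg (by omega)]
    have hmono := hN1 u (by omega) (by omega)
    rw [mul_sub, mul_one, ← pow_add,
      show N1 (u+1) + (N1 (u+1-1) - N1 (u+1)) = N1 u by simp; omega]
    ring

lemma tele_sum (k : ℕ) (N1 : ℕ → ℕ) (hN1 : ∀ i, 1 ≤ i → i ≤ k → N1 (i+1) ≤ N1 i)
    (m : ℕ) (hm1 : 1 ≤ m) (hmk : m + 1 ≤ k)
    (F : (Fin k → Fin 2) → Polynomial ℤ)
    (hF : ∀ p : Fin k → Fin 2, onesCount k p = m → ∀ j, pos1 k m p < j → j ≤ k →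
       F (ins k j p) = F p) :
    ∑ p' ∈ Finset.univ.filter (fun p' : Fin k → Fin 2 => onesCount k p' = m + 1),
        lTerm k N1 p' * deltaR k N1 p' * F p'
      = Polynomial.X ^ (N1 k) *
        ∑ p ∈ Finset.univ.filter
            (fun p : Fin k → Fin 2 => onesCount k p = m ∧ ext' k p k = 0),
          lTerm k N1 p * deltaR k N1 p * F p := by
  classical
  set S := (Finset.univ.filter
      (fun p : Fin k → Fin 2 => onesCount k p = m ∧ ext' k p k = 0)).sigma
      (fun p => Finset.Ioc (pos1 k m p) k) with hS
  -- facts for members of the left filter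
  have hmemS : ∀ x : Σ _ : Fin k → Fin 2, ℕ, x ∈ S →
      onesCount k x.1 = m ∧ ext' k x.1 k = 0 ∧ pos1 k m x.1 < x.2 ∧ x.2 ≤ k := by
    rintro ⟨p, j⟩ hx
    rw [hS, Finset.mem_sigma, Finset.mem_filter, Finset.mem_Ioc] at hx
    exact ⟨hx.1.2.1, hx.1.2.2, hx.2.1, hx.2.2⟩
  have key : ∀ (p : Fin k → Fin 2), onesCount k p = m → ext' k p k = 0 →
      ∀ j, pos1 k m p < j → j ≤ k →
        ext' k p j = 0 ∧ 1 ≤ j ∧ onesCount k (ins k j p) = m + 1 ∧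
          pos1 k (m+1) (ins k j p) = j := by
    intro p hpm hpk j hj1 hj2
    obtain ⟨ht1, ht2⟩ := pos1_spec hm1 (le_of_eq hpm.symm) (p := p)
    have htr := ext'_one_range ht1
    have hj1' : 1 ≤ j := by omega
    have hpj : ext' k p j = 0 := by
      have := ext'_zero_of_gt_last (p := p) (by omega) (i := j) (by rw [hpm]; omega)
      exact this
    have hone : onesCount k (ins k j p) = m + 1 := by
      rw [onesCount_ins hj1' hj2 hpj, hpm]
    refine ⟨hpj, hj1', hone, ?_⟩
    apply pos1_eq
    · rw [ext'_ins hj1' hj2, if_pos rfl]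
    · show cnt k (ins k j p) j = m + 1
      rw [cnt_ins hj1' hj2 hpj, if_pos le_rfl]
      have hcj : cnt k p j = m := by
        have := cnt_eq_total_of_ge_last (p := p) (by omega)
          (j := j) (by rw [hpm]; omega)
        rw [hpm] at this; exact this
      omega
  have hinsdel : ∀ p' : Fin k → Fin 2, onesCount k p' = m + 1 →
      ins k (pos1 k (m+1) p') (del k (pos1 k (m+1) p') p') = p' := by
    intro p' hcount
    obtain ⟨ht1, ht2⟩ := pos1_spec (show 1 ≤ m + 1 by omega)
      (le_of_eq hcount.symm) (p := p')
    set t' := pos1 k (m+1) p' with ht'def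
    have htr := ext'_one_range ht1
    funext n
    simp only [ins, del]
    by_cases h : (↑n : ℕ) + 1 = t'
    · rw [if_pos h]
      have hfin : (⟨t' - 1, by omega⟩ : Fin k) = n := by
        apply Fin.ext; simp; omega
      have hv : (p' n : ℕ) = 1 := by
        have := ht1
        unfold ext' at this
        rw [dif_pos ⟨htr.1, htr.2⟩] at this
        rwa [hfin] at this
      rcases fin2cases (p' n) with h' | h'
      · rw [h'] at hv; simp at hv
      · exact h'.symm
    · rw [if_neg h, if_neg h]
  have step1 : ∑ p' ∈ Finset.univ.filter
        (fun p' : Fin k → Fin 2 => onesCount k p' = m + 1),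
        lTerm k N1 p' * deltaR k N1 p' * F p'
      = ∑ x ∈ S, lTerm k N1 (ins k x.2 x.1) * deltaR k N1 (ins k x.2 x.1)
          * F (ins k x.2 x.1) := by
    apply Finset.sum_nbij'
      (i := fun p' => (⟨del k (pos1 k (m+1) p') p', pos1 k (m+1) p'⟩ :
        Σ _ : Fin k → Fin 2, ℕ))
      (j := fun x => ins k x.2 x.1)
    · -- maps into S
      intro p' hp'
      rw [Finset.mem_filter] at hp'
      have hcount := hp'.2
      obtain ⟨ht1, ht2⟩ := pos1_spec (show 1 ≤ m + 1 by omega)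
        (le_of_eq hcount.symm) (p := p')
      set t' := pos1 k (m+1) p' with ht'def
      have htr := ext'_one_range ht1
      have hdelcnt : onesCount k p' = onesCount k (del k t' p') + 1 :=
        onesCount_del htr.1 htr.2 ht1
      have hdelm : onesCount k (del k t' p') = m := by omega
      -- the m-th one of p'
      obtain ⟨hr1, hr2⟩ := pos1_spec hm1
        (show m ≤ onesCount k p' by omega) (p := p')
      set r'' := pos1 k m p' with hrdef
      have hrr := ext'_one_range hr1
      have hrt : r'' < t' := by
        rcases lt_trichotomy r'' t' with h | h | h
        · exact h
        · exfalso; rw [h, ht2] at hr2; omega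
        · exfalso
          have := ext'_zero_of_gt_last (p := p') (by omega) (i := r'')
            (by rw [hcount]; omega)
          rw [this] at hr1; omega
      have hdelr : ext' k (del k t' p') r'' = 1 := by
        rw [ext'_del htr.1 htr.2, if_neg (by omega)]; exact hr1
      have hdelrc : cnt k (del k t' p') r'' = m := by
        have := cnt_del htr.1 htr.2 ht1 r''
        rw [if_neg (by omega)] at this
        omega
      have hpos : pos1 k m (del k t' p') = r'' := pos1_eq hdelr hdelrc
      have hdelk : ext' k (del k t' p') k = 0 := by
        rw [ext'_del htr.1 htr.2]
        by_cases h : k = t'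
        · rw [if_pos h]
        · rw [if_neg h]
          exact ext'_zero_of_gt_last (p := p') (by omega)
            (by rw [hcount]; omega)
      rw [hS, Finset.mem_sigma, Finset.mem_filter, Finset.mem_Ioc]
      exact ⟨⟨Finset.mem_univ _, hdelm, hdelk⟩, by rw [hpos]; exact hrt, htr.2⟩
    · -- maps into filter
      rintro ⟨p, j⟩ hx
      obtain ⟨h1, h2, h3, h4⟩ := hmemS _ hx
      obtain ⟨_, _, hone, _⟩ := key p h1 h2 j h3 h4
      rw [Finset.mem_filter]
      exact ⟨Finset.mem_univ _, hone⟩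
    · -- left inverse
      intro p' hp'
      rw [Finset.mem_filter] at hp'
      exact hinsdel p' hp'.2
    · -- right inverse : (ins x) maps back to x
      rintro ⟨p, j⟩ hx
      obtain ⟨h1, h2, h3, h4⟩ := hmemS _ hx
      obtain ⟨hpj, hj1', hone, hpos⟩ := key p h1 h2 j h3 h4
      show (⟨del k (pos1 k (m+1) (ins k j p)) (ins k j p),
        pos1 k (m+1) (ins k j p)⟩ : Σ _ : Fin k → Fin 2, ℕ) = ⟨p, j⟩
      rw [hpos]
      congr 1
      funext n
      simp only [del, ins]
      by_cases h : (↑n : ℕ) + 1 = j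
      · rw [if_pos h]
        have hfin : (⟨j - 1, by omega⟩ : Fin k) = n := by
          apply Fin.ext; simp; omega
        have : (p n : ℕ) = 0 := by
          have := hpj
          unfold ext' at this
          rw [dif_pos ⟨hj1', h4⟩] at this
          rwa [hfin] at this
        rcases fin2cases (p n) with h' | h'
        · exact h'.symm
        · rw [h'] at this; simp at this
      · rw [if_neg h, if_neg h]
    · -- summand compatibility
      intro p' hp'
      rw [Finset.mem_filter] at hp'
      have := hinsdel p' hp'.2
      show _ = lTerm k N1 (ins k (pos1 k (m+1) p') (del k (pos1 k (m+1) p') p')) * _ * _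
      rw [this]
  rw [step1, hS, Finset.sum_sigma, Finset.mul_sum]
  apply Finset.sum_congr rfl
  intro p hp
  rw [Finset.mem_filter] at hp
  obtain ⟨-, hpm, hpk⟩ := hp
  obtain ⟨ht1, ht2⟩ := pos1_spec hm1 (le_of_eq hpm.symm) (p := p)
  have htr := ext'_one_range ht1
  have htk : pos1 k m p < k := by
    rcases eq_or_lt_of_le htr.2 with h | h
    · exfalso; rw [h, hpk] at ht1; omega
    · exact h
  have e : ∀ j ∈ Finset.Ioc (pos1 k m p) k,
      lTerm k N1 (ins k j p) * deltaR k N1 (ins k j p) * F (ins k j p)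
      = (Polynomial.X ^ (N1 j) *
          (if j = pos1 k m p + 1 then 1
            else (1 - Polynomial.X ^ (N1 (j-1) - N1 j))))
          * (lTerm k N1 p * deltaR k N1 p * F p) := by
    intro j hj
    rw [Finset.mem_Ioc] at hj
    have hpj : ext' k p j = 0 := by
      apply ext'_zero_of_gt_last (p := p) (by omega)
      rw [hpm]; exact hj.1
    have hins := lTerm_ins N1 (by omega) hj.2 hpj
    have hd := deltaR_ins N1 (p := p) (show 1 ≤ onesCount k p by omega)
      (show pos1 k (onesCount k p) p < j by rw [hpm]; exact hj.1) hj.2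
    rw [hpm] at hd
    rw [hins, hd, hF p hpm j hj.1 hj.2]
    ring
  rw [Finset.sum_congr rfl e, ← Finset.sum_mul,
    teleX N1 k hN1 (pos1 k m p) (by omega) k (by omega) le_rfl]

lemma pos1_ins {k m : ℕ} {p : Fin k → Fin 2} (hm1 : 1 ≤ m) (hpm : onesCount k p = m)
    {j : ℕ} (hjt : pos1 k m p < j) (hjk : j ≤ k)
    {j0 : ℕ} (hj01 : 1 ≤ j0) (hj0m : j0 ≤ m) :
    pos1 k j0 (ins k j p) = pos1 k j0 p := by
  obtain ⟨hr1, hr2⟩ := pos1_spec hj01 (show j0 ≤ onesCount k p by omega) (p := p)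
  set r := pos1 k j0 p with hrdef
  have hrr := ext'_one_range hr1
  have hj1 : 1 ≤ j := by
    obtain ⟨ht1, _⟩ := pos1_spec hm1 (le_of_eq hpm.symm) (p := p)
    have := ext'_one_range ht1
    omega
  have hrj : r < j := by
    by_contra hc
    push_neg at hc
    rcases eq_or_lt_of_le hc with h | h
    · -- r = j impossible: need ext' p j; j > pos1 m p → 0
      have h0 : ext' k p j = 0 :=
        ext'_zero_of_gt_last (p := p) (by omega) (by rw [hpm]; omega)
      rw [h, hr1] at h0; omega
    · have h0 : ext' k p r = 0 :=
        ext'_zero_of_gt_last (p := p) (by omega) (by rw [hpm]; omega)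
      rw [hr1] at h0; omega
  have hpj : ext' k p j = 0 :=
    ext'_zero_of_gt_last (p := p) (by omega) (by rw [hpm]; omega)
  apply pos1_eq
  · rw [ext'_ins hj1 hjk, if_neg (by omega)]; exact hr1
  · show cnt k (ins k j p) r = j0
    rw [cnt_ins hj1 hjk hpj, if_neg (by omega)]
    omega

lemma g1_ins_ext {k b m : ℕ} {p : Fin k → Fin 2} (hm1 : 1 ≤ m) (hpm : onesCount k p = m)
    {j : ℕ} (hjt : pos1 k m p < j) (hjk : j ≤ k) :
    ∀ i ∈ Finset.Icc 1 k,
      ext' k (g1 k (b+1) (ins k j p)) i = ext' k (g1 k b p) i := by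
  intro i hi
  rw [Finset.mem_Icc] at hi
  obtain ⟨ht1, ht2⟩ := pos1_spec hm1 (le_of_eq hpm.symm) (p := p)
  have htr := ext'_one_range ht1
  have hj1 : 1 ≤ j := by omega
  have hpj : ext' k p j = 0 :=
    ext'_zero_of_gt_last (p := p) (by omega) (by rw [hpm]; omega)
  have hic : onesCount k (ins k j p) = m + 1 := by
    rw [onesCount_ins hj1 hjk hpj, hpm]
  rw [ext'_g1, ext'_g1, hic, hpm, show m + 1 - (b+1) = m - b by omega]
  rcases lt_trichotomy i j with hij | hij | hij
  · rw [cnt_ins hj1 hjk hpj, if_neg (show ¬ j ≤ i - 1 by omega), add_zero,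
      ext'_ins hj1 hjk, if_neg (show i = j → False by omega)]
  · subst hij
    have hcj : cnt k p (i - 1) = m := by
      have := cnt_eq_total_of_ge_last (p := p) (by omega)
        (j := i - 1) (by rw [hpm]; omega)
      rw [hpm] at this; exact this
    rw [cnt_ins hj1 hjk hpj, if_neg (show ¬ i ≤ i - 1 by omega), add_zero, hcj,
      if_pos (by omega), hpj]
    split <;> rfl
  · have hpi : ext' k p i = 0 :=
      ext'_zero_of_gt_last (p := p) (by omega) (by rw [hpm]; omega)
    rw [ext'_ins hj1 hjk, if_neg (show i = j → False by omega), hpi]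
    split <;> split <;> rfl

/-- Lemma 4.1: the alternating combination of linear terms equals the starred
linear term `L*_{k₀,k₁,k₂}(q)`. -/
theorem stmt14 (k k0 k1 k2 : ℕ) (h0 : 1 ≤ k0) (h1 : 1 ≤ k1) (h2 : 1 ≤ k2)
    (hsum : k0 + k1 + k2 = k) (N1 N2 : ℕ → ℕ)
    (hN1 : ∀ i, 1 ≤ i → i ≤ k → N1 (i + 1) ≤ N1 i)
    (hN1z : ∀ i, k < i → N1 i = 0)
    (hN2 : ∀ i, 1 ≤ i → i < k → N2 i ≤ N2 (i + 1))
    (hN20 : N2 0 = 0) :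
    Lfun k N1 N2 k1 k2 - Lfun k N1 N2 (k1 + 1) k2
      - Lfun k N1 N2 (k1 - 1) (k2 + 1) + Lfun k N1 N2 k1 (k2 + 1) =
    (∑ p ∈ Finset.univ.filter
        (fun p : Fin k → Fin 2 => onesCount k p = k1 + k2 ∧ ext' k p k = 1),
      lTerm k N1 p * deltaR k N1 p * lTerm k N2 (g1 k k1 p) *
        (1 - Polynomial.X ^ N2 (pos1 k (k2 + 1) p)))
    + (∑ p ∈ Finset.univ.filter
        (fun p : Fin k → Fin 2 => onesCount k p = k1 + k2 ∧ ext' k p k = 0),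
      lTerm k N1 p * deltaR k N1 p * (1 - Polynomial.X ^ N1 k) *
        lTerm k N2 (g1 k k1 p) *
        (1 - Polynomial.X ^ N2 (pos1 k (k2 + 1) p))) := by
  classical
  have hm1 : 1 ≤ k1 + k2 := by omega
  have hmk : k1 + k2 + 1 ≤ k := by omega
  set F : (Fin k → Fin 2) → Polynomial ℤ := fun p =>
    lTerm k N2 (g1 k (onesCount k p - k2) p) *
      (1 - Polynomial.X ^ N2 (pos1 k (k2+1) p)) with hFdef
  have hFinv : ∀ p : Fin k → Fin 2, onesCount k p = k1 + k2 →
      ∀ j, pos1 k (k1 + k2) p < j → j ≤ k → F (ins k j p) = F p := by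
    intro p hpm j hjt hjk
    obtain ⟨ht1, ht2⟩ := pos1_spec hm1 (le_of_eq hpm.symm) (p := p)
    have htr := ext'_one_range ht1
    have hj1 : 1 ≤ j := by omega
    have hpj : ext' k p j = 0 :=
      ext'_zero_of_gt_last (p := p) (by omega) (by rw [hpm]; omega)
    have hic : onesCount k (ins k j p) = k1 + k2 + 1 := by
      rw [onesCount_ins hj1 hjk hpj, hpm]
    rw [hFdef]
    simp only
    rw [hic, hpm, show k1 + k2 + 1 - k2 = (k1 + k2 - k2) + 1 by omega]
    rw [lTerm_congr (g1_ins_ext hm1 hpm hjt hjk)]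
    rw [pos1_ins hm1 hpm hjt hjk (by omega) (by omega)]
  have hA1 : ∀ p : Fin k → Fin 2, onesCount k p = k1 + k2 →
      lTerm k N2 (g1 k (k1 - 1) p)
        = Polynomial.X ^ N2 (pos1 k (k2+1) p) * lTerm k N2 (g1 k k1 p) := by
    intro p hpm
    have h := lTerm_g1_succ (N := N2) (p := p) (b := k1 - 1) (by rw [hpm]; omega)
    rwa [hpm, show k1 + k2 - (k1 - 1) = k2 + 1 by omega,
      show k1 - 1 + 1 = k1 by omega] at h
  have hA2 : ∀ p : Fin k → Fin 2, onesCount k p = k1 + k2 + 1 →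
      lTerm k N2 (g1 k k1 p)
        = Polynomial.X ^ N2 (pos1 k (k2+1) p) * lTerm k N2 (g1 k (k1+1) p) := by
    intro p hpm
    have h := lTerm_g1_succ (N := N2) (p := p) (b := k1) (by rw [hpm]; omega)
    rwa [hpm, show k1 + k2 + 1 - k1 = k2 + 1 by omega] at h
  have hFm : ∀ p : Fin k → Fin 2, onesCount k p = k1 + k2 →
      F p = lTerm k N2 (g1 k k1 p)
        * (1 - Polynomial.X ^ N2 (pos1 k (k2+1) p)) := by
    intro p hpm
    rw [hFdef]
    simp only
    rw [hpm, show k1 + k2 - k2 = k1 by omega]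
  have hFm1 : ∀ p : Fin k → Fin 2, onesCount k p = k1 + k2 + 1 →
      F p = lTerm k N2 (g1 k (k1+1) p)
        * (1 - Polynomial.X ^ N2 (pos1 k (k2+1) p)) := by
    intro p hpm
    rw [hFdef]
    simp only
    rw [hpm, show k1 + k2 + 1 - k2 = k1 + 1 by omega]
  have htel := tele_sum k N1 hN1 (k1+k2) hm1 hmk F hFinv
  unfold Lfun
  rw [show k1 - 1 + (k2 + 1) = k1 + k2 by omega,
    show k1 + 1 + k2 = k1 + k2 + 1 by omega,
    show k1 + (k2 + 1) = k1 + k2 + 1 by omega]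
  have e1 : (∑ p ∈ Finset.univ.filter
        (fun p : Fin k → Fin 2 => onesCount k p = k1 + k2),
        lTerm k N1 p * deltaR k N1 p * lTerm k N2 (g1 k k1 p))
      - (∑ p ∈ Finset.univ.filter
        (fun p : Fin k → Fin 2 => onesCount k p = k1 + k2),
        lTerm k N1 p * deltaR k N1 p * lTerm k N2 (g1 k (k1-1) p))
      = ∑ p ∈ Finset.univ.filter
        (fun p : Fin k → Fin 2 => onesCount k p = k1 + k2),
        lTerm k N1 p * deltaR k N1 p * F p := by
    rw [← Finset.sum_sub_distrib]
    apply Finset.sum_congr rfl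
    intro p hp
    rw [Finset.mem_filter] at hp
    rw [hA1 p hp.2, hFm p hp.2]
    ring
  have e2 : (∑ p ∈ Finset.univ.filter
        (fun p : Fin k → Fin 2 => onesCount k p = k1 + k2 + 1),
        lTerm k N1 p * deltaR k N1 p * F p)
      = (∑ p ∈ Finset.univ.filter
        (fun p : Fin k → Fin 2 => onesCount k p = k1 + k2 + 1),
        lTerm k N1 p * deltaR k N1 p * lTerm k N2 (g1 k (k1+1) p))
      - (∑ p ∈ Finset.univ.filter
        (fun p : Fin k → Fin 2 => onesCount k p = k1 + k2 + 1),
        lTerm k N1 p * deltaR k N1 p * lTerm k N2 (g1 k k1 p)) := by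
    rw [← Finset.sum_sub_distrib]
    apply Finset.sum_congr rfl
    intro p hp
    rw [Finset.mem_filter] at hp
    rw [hA2 p hp.2, hFm1 p hp.2]
    ring
  have hsplit := Finset.sum_filter_add_sum_filter_not
    (Finset.univ.filter (fun p : Fin k → Fin 2 => onesCount k p = k1 + k2))
    (fun p => ext' k p k = 1)
    (fun p => lTerm k N1 p * deltaR k N1 p * F p)
  rw [Finset.filter_filter, Finset.filter_filter] at hsplit
  have hfeq : Finset.univ.filter
      (fun p : Fin k → Fin 2 => onesCount k p = k1 + k2 ∧ ¬ ext' k p k = 1)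
      = Finset.univ.filter
      (fun p : Fin k → Fin 2 => onesCount k p = k1 + k2 ∧ ext' k p k = 0) := by
    apply Finset.filter_congr
    intro p _
    have := ext'_le_one k p k
    constructor
    · rintro ⟨a, b⟩; exact ⟨a, by omega⟩
    · rintro ⟨a, b⟩; exact ⟨a, by omega⟩
  rw [hfeq] at hsplit
  have hS1 : (∑ p ∈ Finset.univ.filter
        (fun p : Fin k → Fin 2 => onesCount k p = k1 + k2 ∧ ext' k p k = 1),
        lTerm k N1 p * deltaR k N1 p * F p)
      = ∑ p ∈ Finset.univ.filter
        (fun p : Fin k → Fin 2 => onesCount k p = k1 + k2 ∧ ext' k p k = 1),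
        lTerm k N1 p * deltaR k N1 p * lTerm k N2 (g1 k k1 p) *
          (1 - Polynomial.X ^ N2 (pos1 k (k2 + 1) p)) := by
    apply Finset.sum_congr rfl
    intro p hp
    rw [Finset.mem_filter] at hp
    rw [hFm p hp.2.1]
    ring
  have hS0 : (∑ p ∈ Finset.univ.filter
        (fun p : Fin k → Fin 2 => onesCount k p = k1 + k2 ∧ ext' k p k = 0),
        lTerm k N1 p * deltaR k N1 p * F p)
      - Polynomial.X ^ N1 k * (∑ p ∈ Finset.univ.filter
        (fun p : Fin k → Fin 2 => onesCount k p = k1 + k2 ∧ ext' k p k = 0),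
        lTerm k N1 p * deltaR k N1 p * F p)
      = ∑ p ∈ Finset.univ.filter
        (fun p : Fin k → Fin 2 => onesCount k p = k1 + k2 ∧ ext' k p k = 0),
        lTerm k N1 p * deltaR k N1 p * (1 - Polynomial.X ^ N1 k) *
          lTerm k N2 (g1 k k1 p) *
          (1 - Polynomial.X ^ N2 (pos1 k (k2 + 1) p)) := by
    rw [Finset.mul_sum, ← Finset.sum_sub_distrib]
    apply Finset.sum_congr rfl
    intro p hp
    rw [Finset.mem_filter] at hp
    rw [hFm p hp.2.1]
    ring
  linear_combination e1 + e2 - hsplit - htel + hS1 + hS0
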